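/- Let p_1 < p_2 be distinct positive real numbers and r a positive real number. Then the inertia of the 2×2 Kwong matrix K_r(p_1,p_2) equals (2,0,0) if 0 < r < 1, equals (1,1,0) if r = 1, and equals (1,0,1) if r > 1. -/

import Mathlib

open Matrix

/-- The Kwong matrix: (i,j) entry is `(p i ^ r + p j ^ r) / (p i + p j)`. -/
noncomputable def kwong {n : ℕ} (p : Fin n → ℝ) (r : ℝ) : Matrix (Fin n) (Fin n) ℝ :=
  Matrix.of fun i j => (p i ^ r + p j ^ r) / (p i + p j)

lemma kwong_isHermitian {n : ℕ} (p : Fin n → ℝ) (r : ℝ) : (kwong p r).IsHermitian := by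
  ext i j
  simp only [kwong, Matrix.conjTranspose_apply, Matrix.of_apply, star_trivial]
  rw [add_comm (p j ^ r), add_comm (p j)]

/-- The inertia of a real symmetric matrix: the numbers of positive, zero and
negative eigenvalues, counted with multiplicity. -/
noncomputable def inertia {n : ℕ} (A : Matrix (Fin n) (Fin n) ℝ) (hA : A.IsHermitian) :
    ℕ × ℕ × ℕ :=
  ({i | 0 < hA.eigenvalues i}.ncard, {i | hA.eigenvalues i = 0}.ncard,
    {i | hA.eigenvalues i < 0}.ncard)

lemma eig_mul {A : Matrix (Fin 2) (Fin 2) ℝ} (hA : A.IsHermitian) :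
    hA.eigenvalues 0 * hA.eigenvalues 1 = A.det := by
  have h := hA.det_eq_prod_eigenvalues
  simp [Fin.prod_univ_two] at h
  linarith

lemma eig_add {A : Matrix (Fin 2) (Fin 2) ℝ} (hA : A.IsHermitian) :
    hA.eigenvalues 0 + hA.eigenvalues 1 = A.trace := by
  have h := hA.trace_eq_sum_eigenvalues
  simp [Fin.sum_univ_two] at h
  linarith

lemma inertia_of_pos_pos {A : Matrix (Fin 2) (Fin 2) ℝ} (hA : A.IsHermitian)
    (hd : 0 < A.det) (ht : 0 < A.trace) : inertia A hA = (2, 0, 0) := by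
  have hm := eig_mul hA; have ha := eig_add hA
  set e := hA.eigenvalues with he
  have h0 : 0 < e 0 := by nlinarith
  have h1 : 0 < e 1 := by nlinarith
  have hP : {i : Fin 2 | 0 < e i} = Set.univ := by
    ext i; fin_cases i <;> simp [h0, h1]
  have hZ : {i : Fin 2 | e i = 0} = ∅ := by
    ext i; fin_cases i <;> simp [h0.ne', h1.ne']
  have hN : {i : Fin 2 | e i < 0} = ∅ := by
    ext i; fin_cases i <;> simp [h0.le.not_gt, h1.le.not_gt]
  simp [inertia, ← he, hP, hZ, hN, Set.ncard_univ]

lemma inertia_of_det_zero {A : Matrix (Fin 2) (Fin 2) ℝ} (hA : A.IsHermitian)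
    (hd : A.det = 0) (ht : 0 < A.trace) : inertia A hA = (1, 1, 0) := by
  have hm := eig_mul hA; have ha := eig_add hA
  set e := hA.eigenvalues with he
  rw [hd] at hm
  rcases mul_eq_zero.mp hm with h0 | h1
  · have h1 : 0 < e 1 := by nlinarith
    have hP : {i : Fin 2 | 0 < e i} = {1} := by
      ext i; fin_cases i <;> simp [h0, h1]
    have hZ : {i : Fin 2 | e i = 0} = {0} := by
      ext i; fin_cases i <;> simp [h0, h1.ne']
    have hN : {i : Fin 2 | e i < 0} = ∅ := by
      ext i; fin_cases i <;> simp [h0, h1.le.not_gt]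
    simp [inertia, ← he, hP, hZ, hN]
  · have h0 : 0 < e 0 := by nlinarith
    have hP : {i : Fin 2 | 0 < e i} = {0} := by
      ext i; fin_cases i <;> simp [h0, h1]
    have hZ : {i : Fin 2 | e i = 0} = {1} := by
      ext i; fin_cases i <;> simp [h1, h0.ne']
    have hN : {i : Fin 2 | e i < 0} = ∅ := by
      ext i; fin_cases i <;> simp [h1, h0.le.not_gt]
    simp [inertia, ← he, hP, hZ, hN]

lemma inertia_of_det_neg {A : Matrix (Fin 2) (Fin 2) ℝ} (hA : A.IsHermitian)
    (hd : A.det < 0) : inertia A hA = (1, 0, 1) := by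
  have hm := eig_mul hA
  set e := hA.eigenvalues with he
  rcases lt_or_ge 0 (e 0) with h0 | h0
  · have h1 : e 1 < 0 := by nlinarith
    have hP : {i : Fin 2 | 0 < e i} = {0} := by
      ext i; fin_cases i <;> simp [h0, h1.not_gt, h1.le.not_gt]
    have hZ : {i : Fin 2 | e i = 0} = ∅ := by
      ext i; fin_cases i <;> simp [h0.ne', h1.ne]
    have hN : {i : Fin 2 | e i < 0} = {1} := by
      ext i; fin_cases i <;> simp [h0.le.not_gt, h1]
    simp [inertia, ← he, hP, hZ, hN]
  · have h0' : e 0 < 0 := lt_of_le_of_ne h0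
      (by intro h; rw [h, zero_mul] at hm; linarith)
    have h1 : 0 < e 1 := by nlinarith
    have hP : {i : Fin 2 | 0 < e i} = {1} := by
      ext i; fin_cases i <;> simp [h0'.le.not_gt, h1]
    have hZ : {i : Fin 2 | e i = 0} = ∅ := by
      ext i; fin_cases i <;> simp [h0'.ne, h1.ne']
    have hN : {i : Fin 2 | e i < 0} = {0} := by
      ext i; fin_cases i <;> simp [h0', h1.le.not_gt]
    simp [inertia, ← he, hP, hZ, hN]

/-- for `0 < p 0 < p 1` and `r > 0`, the inertia of the `2 × 2` Kwong
matrix is `(2,0,0)` if `0 < r < 1`, `(1,1,0)` if `r = 1`, and `(1,0,1)` if `r > 1`. -/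
theorem inertia_kwong_two {p : Fin 2 → ℝ} (hpos : ∀ i, 0 < p i) (hmono : StrictMono p)
    (r : ℝ) (hr : 0 < r) :
    (r < 1 → inertia (kwong p r) (kwong_isHermitian p r) = (2, 0, 0)) ∧
    (r = 1 → inertia (kwong p r) (kwong_isHermitian p r) = (1, 1, 0)) ∧
    (1 < r → inertia (kwong p r) (kwong_isHermitian p r) = (1, 0, 1)) := by
  have hx := hpos 0
  have hy := hpos 1
  have hxy : p 0 < p 1 := hmono (by decide : (0 : Fin 2) < 1)
  have h1 : p 0 + p 0 ≠ 0 := by positivity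
  have h2 : p 1 + p 1 ≠ 0 := by positivity
  have h3 : p 0 + p 1 ≠ 0 := by positivity
  have h4 : p 0 ≠ 0 := hx.ne'
  have h5 : p 1 ≠ 0 := hy.ne'
  have hdet : (kwong p r).det =
      ((p 1 * p 0 ^ r - p 0 * p 1 ^ r) * (p 1 * p 1 ^ r - p 0 * p 0 ^ r)) /
        (p 0 * p 1 * (p 0 + p 1) ^ 2) := by
    rw [Matrix.det_fin_two]
    simp only [kwong, Matrix.of_apply]
    field_simp
    ring
  have htr : (kwong p r).trace = p 0 ^ r / p 0 + p 1 ^ r / p 1 := by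
    rw [Matrix.trace_fin_two]
    simp only [kwong, Matrix.of_apply]
    field_simp
  have htrpos : 0 < (kwong p r).trace := by rw [htr]; positivity
  have hF2 : 0 < p 1 * p 1 ^ r - p 0 * p 0 ^ r := by
    have h := mul_lt_mul'' hxy (Real.rpow_lt_rpow hx.le hxy hr) hx.le
      (Real.rpow_pos_of_pos hx r).le
    linarith
  have hF1 : p 1 * p 0 ^ r - p 0 * p 1 ^ r =
      p 0 * p 1 * (p 0 ^ (r - 1) - p 1 ^ (r - 1)) := by
    rw [Real.rpow_sub hx, Real.rpow_sub hy, Real.rpow_one, Real.rpow_one]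
    field_simp
  have hden : 0 < p 0 * p 1 * (p 0 + p 1) ^ 2 := by positivity
  refine ⟨fun hr1 => ?_, fun hr1 => ?_, fun hr1 => ?_⟩
  · apply inertia_of_pos_pos _ _ htrpos
    rw [hdet]
    apply div_pos _ hden
    apply mul_pos _ hF2
    rw [hF1]
    have : p 1 ^ (r - 1) < p 0 ^ (r - 1) :=
      Real.rpow_lt_rpow_of_neg hx hxy (by linarith)
    nlinarith
  · apply inertia_of_det_zero _ _ htrpos
    rw [hdet, hF1, hr1]
    simp
  · apply inertia_of_det_neg
    rw [hdet]
    apply div_neg_of_neg_of_pos _ hden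
    apply mul_neg_of_neg_of_pos _ hF2
    rw [hF1]
    have : p 0 ^ (r - 1) < p 1 ^ (r - 1) :=
      Real.rpow_lt_rpow hx.le hxy (by linarith)
    nlinarith
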